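/- arXiv:1103.5970 — 7 statements merged into one kernel-verified Lean document; each statement's English description precedes it below -/
import Mathlib

section
/- If a group G is virtually nilpotent, i.e. G has a nilpotent subgroup of finite index, then G admits no 2-transitive action on an infinite set: for every action of G on an infinite set X, the action is not 2-transitive. (Lemma 1 of the paper.) -/
/-- An action of a group `G` on a set `X` is 2-transitive if for any two pairs
`(x₁, x₂)` and `(y₁, y₂)` of elements of `X` with `x₁ ≠ x₂` and `y₁ ≠ y₂` there exists
`g ∈ G` with `g • x₁ = y₁` and `g • x₂ = y₂`. -/
def IsTwoTransitive (G X : Type*) [Group G] [MulAction G X] : Prop :=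
  ∀ x₁ x₂ y₁ y₂ : X, x₁ ≠ x₂ → y₁ ≠ y₂ → ∃ g : G, g • x₁ = y₁ ∧ g • x₂ = y₂

open scoped commutatorElement

/-- If a finite-index subgroup acts trivially, every "orbit-like" set is finite. -/
private lemma aux_finQuot {G X : Type*} [Group G] [MulAction G X] (K : Subgroup G)
    (hfin : K.FiniteIndex)
    (htriv : ∀ k ∈ K, ∀ x : X, k • x = x) (Y : Set X) (hY : Y.Infinite)
    (htrans : ∀ y ∈ Y, ∀ z ∈ Y, ∃ g : G, g • y = z) : False := by
  obtain ⟨y₀, hy₀⟩ := hY.nonempty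
  have hfinQ : Finite (G ⧸ K) := by
    have : Nat.card (G ⧸ K) ≠ 0 := hfin.index_ne_zero
    exact Nat.finite_of_card_ne_zero this
  set f : G ⧸ K → X := fun q => Quotient.liftOn' q (fun g => g • y₀) (by
    intro a b hab
    have hab' : a⁻¹ * b ∈ K := QuotientGroup.leftRel_apply.mp hab
    have : (a⁻¹ * b) • y₀ = y₀ := htriv _ hab' y₀
    calc a • y₀ = a • ((a⁻¹ * b) • y₀) := by rw [this]
    _ = b • y₀ := by rw [smul_smul]; group) with hf
  have hsub : Y ⊆ Set.range f := by
    intro y hy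
    obtain ⟨g, hg⟩ := htrans y₀ hy₀ y hy
    exact ⟨QuotientGroup.mk g, hg⟩
  exact (hY.mono hsub) (Set.finite_range f)

/-- A normal subgroup acting nontrivially under a 2-transitive action is transitive. -/
private lemma aux_trans_of_normal {G X : Type*} [Group G] [MulAction G X]
    (M : Subgroup G) (hM : M.Normal) (h2 : IsTwoTransitive G X)
    (hnt : ∃ m ∈ M, ∃ x : X, m • x ≠ x) : ∀ y z : X, ∃ m ∈ M, m • y = z := by
  obtain ⟨m₀, hm₀, x₀, hx₀⟩ := hnt
  intro y z
  rcases eq_or_ne y z with rfl | hyz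
  · exact ⟨1, one_mem M, one_smul G y⟩
  · obtain ⟨g, hg1, hg2⟩ := h2 x₀ (m₀ • x₀) y z (Ne.symm hx₀) hyz
    refine ⟨g * m₀ * g⁻¹, hM.conj_mem m₀ hm₀ g, ?_⟩
    rw [← hg1, ← hg2]
    simp [smul_smul, mul_assoc]

/-- A virtually nilpotent group admits no 2-transitive action on an infinite set. -/
theorem virtually_nilpotent_not_two_transitive
    (G : Type*) [Group G] (H : Subgroup G) (hfin : H.FiniteIndex)
    (hnil : Group.IsNilpotent H)
    (X : Type*) [Infinite X] [MulAction G X] :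
    ¬ IsTwoTransitive G X := by
  intro h2
  classical
  haveI := hfin
  haveI := hnil
  set N := H.normalCore with hNdef
  haveI hNnormal : N.Normal := H.normalCore_normal
  haveI hNfin : N.FiniteIndex := Subgroup.finiteIndex_normalCore H
  have hNle : N ≤ H := H.normalCore_le
  have hnilN : Group.IsNilpotent N :=
    nilpotent_of_mulEquiv (Subgroup.subgroupOfEquivOfLe hNle)
  -- G acts transitively
  obtain ⟨a, b, hab⟩ := exists_pair_ne X
  have hGnt : ∃ g ∈ (⊤ : Subgroup G), ∃ x : X, g • x ≠ x := by
    obtain ⟨g, hg1, _⟩ := h2 a b b a hab hab.symm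
    exact ⟨g, trivial, a, by rw [hg1]; exact hab.symm⟩
  have hGtrans := aux_trans_of_normal ⊤ inferInstance h2 hGnt
  -- N acts nontrivially
  have hNnt : ∃ n ∈ N, ∃ x : X, n • x ≠ x := by
    by_contra hc
    push_neg at hc
    refine aux_finQuot N hNfin (fun k hk x => hc k hk x) Set.univ Set.infinite_univ ?_
    intro y _ z _
    obtain ⟨g, _, hg⟩ := hGtrans y z
    exact ⟨g, hg⟩
  have hNtrans := aux_trans_of_normal N hNnormal h2 hNnt
  -- the descending chain of commutators with N
  set D : ℕ → Subgroup G := fun k => Nat.rec N (fun _ Dk => ⁅Dk, N⁆) k with hDdef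
  have hD0 : D 0 = N := rfl
  have hDsucc : ∀ k, D (k + 1) = ⁅D k, N⁆ := fun _ => rfl
  have hDnormal : ∀ k, (D k).Normal := by
    intro k
    induction k with
    | zero => exact hNnormal
    | succ k ih => exact @Subgroup.commutator_normal _ _ _ _ ih hNnormal
  have hDle : ∀ k, D k ≤ (Subgroup.lowerCentralSeries (⊤ : Subgroup N) k).map N.subtype := by
    intro k
    induction k with
    | zero =>
      rw [hD0]
      intro n hn
      exact ⟨⟨n, hn⟩, Subgroup.mem_top _, rfl⟩
    | succ k ih =>
      rw [hDsucc]
      have h1 : (Subgroup.lowerCentralSeries (⊤ : Subgroup N) (k + 1)).map N.subtype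
          = ⁅(Subgroup.lowerCentralSeries (⊤ : Subgroup N) k).map N.subtype, (⊤ : Subgroup N).map N.subtype⁆ := by
        have : Subgroup.lowerCentralSeries (⊤ : Subgroup N) (k + 1) = ⁅Subgroup.lowerCentralSeries (⊤ : Subgroup N) k, ⊤⁆ := rfl
        rw [this, Subgroup.map_commutator]
      have h2' : (⊤ : Subgroup N).map N.subtype = N := by
        rw [← MonoidHom.range_eq_map, Subgroup.range_subtype]
      rw [h1, h2']
      exact Subgroup.commutator_mono ih le_rfl
  -- D becomes trivial on X
  obtain ⟨nn, hnn⟩ := nilpotent_iff_lowerCentralSeries.mp hnilN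
  set P : ℕ → Prop := fun k => ∀ g ∈ D k, ∀ x : X, g • x = x with hPdef
  have hPnn : P nn := by
    intro g hg x
    have := hDle nn hg
    rw [hnn] at this
    obtain ⟨m, hm, rfl⟩ := this
    have : m = 1 := Subgroup.mem_bot.mp hm
    rw [this]
    simp
  have hP0 : ¬ P 0 := by
    intro hP
    obtain ⟨n, hn, x, hx⟩ := hNnt
    exact hx (hP n (hD0 ▸ hn) x)
  -- minimal index where D acts trivially
  have hex : ∃ k, P k := ⟨nn, hPnn⟩
  set i := Nat.find hex with hi
  have hiP : P i := Nat.find_spec hex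
  have hine : i ≠ 0 := by
    intro h
    exact hP0 (h ▸ hiP)
  obtain ⟨j, hj⟩ : ∃ j, i = j + 1 := ⟨i - 1, (Nat.succ_pred_eq_of_ne_zero hine).symm⟩
  have hjP : ¬ P j := Nat.find_min hex (by omega)
  have hjsuccP : P (j + 1) := hj ▸ hiP
  set Z := D j with hZdef
  haveI hZnormal : Z.Normal := hDnormal j
  have hZnt : ∃ z ∈ Z, ∃ x : X, z • x ≠ x := by
    by_contra hc
    push_neg at hc
    exact hjP (fun g hg x => hc g hg x)
  -- elements of Z commute with elements of N modulo the action
  have hcomm : ∀ z ∈ Z, ∀ n ∈ N, ∀ x : X, z • n • x = n • z • x := by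
    intro z hz n hn x
    have hc : ⁅z, n⁆ ∈ ⁅Z, N⁆ := Subgroup.commutator_mem_commutator hz hn
    have hc' : ∀ y : X, ⁅z, n⁆ • y = y := fun y => hjsuccP ⁅z, n⁆ ((hDsucc j) ▸ hc) y
    have key : z * n = ⁅z, n⁆ * (n * z) := by
      rw [commutatorElement_def]; group
    calc z • n • x = (z * n) • x := (smul_smul z n x)
    _ = ⁅z, n⁆ • (n * z) • x := by rw [key, mul_smul]
    _ = (n * z) • x := hc' _
    _ = n • z • x := mul_smul n z x
  -- Z is transitive
  have hZtrans := aux_trans_of_normal Z hZnormal h2 hZnt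
  -- N acts semiregularly
  have hsemi : ∀ n ∈ N, ∀ x : X, n • x = x → ∀ y : X, n • y = y := by
    intro n hn x hx y
    obtain ⟨z, hz, hzx⟩ := hZtrans x y
    rw [← hzx, ← hcomm z hz n hn x, hx]
  -- final contradiction via the stabilizer of a point
  obtain ⟨xbar⟩ : Nonempty X := inferInstance
  set S := MulAction.stabilizer G xbar with hSdef
  set K : Subgroup S := N.subgroupOf S with hKdef
  have hKfin : K.FiniteIndex := by
    constructor
    have hdvd : N.relIndex S ∣ N.index := @Subgroup.relIndex_dvd_index_of_normal G _ N S hNnormal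
    intro h0
    rw [hKdef] at h0
    have : N.relIndex S = 0 := h0
    rw [this] at hdvd
    exact hNfin.index_ne_zero (zero_dvd_iff.mp hdvd)
  have hKtriv : ∀ k ∈ K, ∀ x : X, k • x = x := by
    intro k hk x
    have hkN : (k : G) ∈ N := hk
    have hkS : (k : G) • xbar = xbar := k.2
    have : (k : G) • x = x := hsemi (k : G) hkN xbar hkS x
    exact this
  have hYinf : Set.Infinite ({xbar}ᶜ : Set X) := (Set.finite_singleton xbar).infinite_compl
  refine aux_finQuot K hKfin hKtriv ({xbar}ᶜ : Set X) hYinf ?_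
  intro y hy z hz
  have hy' : xbar ≠ y := fun h => hy (h ▸ rfl)
  have hz' : xbar ≠ z := fun h => hz (h ▸ rfl)
  obtain ⟨g, hg1, hg2⟩ := h2 xbar y xbar z hy' hz'
  exact ⟨⟨g, hg1⟩, hg2⟩
end

section
/- Let a group G act faithfully and 2-transitively on a set X, and let A be a nontrivial abelian normal subgroup of G. Then A acts simply transitively on X: for every x ∈ X, the map A → X sending a ↦ a·x is a bijection. (Claim established in the proof of Lemma 1.) -/
/-- If a group `G` acts faithfully and 2-transitively on a set `X` and `A` is a nontrivial
abelian normal subgroup of `G`, then `A` acts simply transitively on `X`: for every `x ∈ X`,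
the map `A → X`, `a ↦ a • x`, is a bijection. -/
theorem abelian_normal_subgroup_simply_transitive_of_faithful_two_transitive
    {G X : Type*} [Group G] [MulAction G X] [FaithfulSMul G X]
    (h2 : IsTwoTransitive G X)
    (A : Subgroup G) (hA : A ≠ ⊥) (hAnorm : A.Normal)
    (hAab : ∀ a b : G, a ∈ A → b ∈ A → a * b = b * a) :
    ∀ x : X, Function.Bijective (fun a : A => (a : G) • x) := by
  -- get a nontrivial element of A
  obtain ⟨a, haA, ha1⟩ : ∃ a ∈ A, a ≠ 1 := by
    by_contra h
    push_neg at h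
    exact hA (le_antisymm (fun g hg => by simpa using h g hg) bot_le)
  -- a moves some point
  obtain ⟨x₀, hx₀⟩ : ∃ x₀ : X, a • x₀ ≠ x₀ := by
    by_contra h
    push_neg at h
    exact ha1 (eq_of_smul_eq_smul (fun y : X => by simpa using h y))
  -- A is transitive
  have trans : ∀ u v : X, ∃ b ∈ A, b • u = v := by
    intro u v
    rcases eq_or_ne u v with rfl | huv
    · exact ⟨1, A.one_mem, one_smul _ _⟩
    · obtain ⟨g, hg1, hg2⟩ := h2 x₀ (a • x₀) u v (Ne.symm hx₀) huv
      refine ⟨g * a * g⁻¹, hAnorm.conj_mem a haA g, ?_⟩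
      rw [← hg1, ← hg2]
      simp [mul_smul]
  intro x
  constructor
  · rintro ⟨b, hbA⟩ ⟨c, hcA⟩ h
    simp only [Subtype.mk.injEq] at h ⊢
    -- c⁻¹ * b fixes x, hence fixes everything
    have hfix : (c⁻¹ * b) • x = x := by
      rw [mul_smul, h, ← mul_smul, inv_mul_cancel, one_smul]
    have hmem : c⁻¹ * b ∈ A := A.mul_mem (A.inv_mem hcA) hbA
    have : c⁻¹ * b = 1 := by
      apply eq_of_smul_eq_smul (fun y : X => ?_)
      obtain ⟨d, hdA, hd⟩ := trans x y
      rw [one_smul, ← hd, ← mul_smul, hAab _ _ hmem hdA, mul_smul, hfix]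
    exact (inv_mul_eq_one.mp this).symm
  · intro y
    obtain ⟨b, hbA, hb⟩ := trans x y
    exact ⟨⟨b, hbA⟩, hb⟩
end

section
/- Let a group G act 2-transitively on a set X, let A be a normal subgroup of G, and let x ∈ X be such that the map A → X, a ↦ a·x, is a bijection. Then the conjugation action of the stabilizer Gₓ = {g ∈ G : g·x = x} on A is transitive on the nontrivial elements of A: for any a, a' ∈ A with a ≠ 1 and a' ≠ 1, there exists g ∈ Gₓ with g a g⁻¹ = a'. (Key step in the proof of Lemma 1.) -/
/-- Let `G` act 2-transitively on `X`, let `A` be a normal subgroup of `G`, and let `x ∈ X`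
be such that `a ↦ a • x` is a bijection from `A` to `X`. Then the conjugation action of the
stabilizer of `x` on `A` is transitive on the nontrivial elements of `A`. -/
theorem stabilizer_conj_transitive_on_nontrivial_elements
    {G X : Type*} [Group G] [MulAction G X]
    (h2 : IsTwoTransitive G X)
    (A : Subgroup G) (hAnorm : A.Normal) (x : X)
    (hbij : Function.Bijective (fun a : A => (a : G) • x)) :
    ∀ a a' : G, a ∈ A → a' ∈ A → a ≠ 1 → a' ≠ 1 →
      ∃ g ∈ MulAction.stabilizer G x, g * a * g⁻¹ = a' := by
  intro a a' ha ha' hne hne'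
  have key : ∀ b : G, b ∈ A → b ≠ 1 → b • x ≠ x := by
    intro b hb hb1 h
    apply hb1
    have : (⟨b, hb⟩ : A) = ⟨1, A.one_mem⟩ := hbij.injective (by simpa using h)
    simpa using congrArg Subtype.val this
  obtain ⟨g, hg1, hg2⟩ := h2 x (a • x) x (a' • x) (Ne.symm (key a ha hne))
    (Ne.symm (key a' ha' hne'))
  refine ⟨g, hg1, ?_⟩
  have hmem : g * a * g⁻¹ ∈ A := hAnorm.conj_mem a ha g
  have : (⟨g * a * g⁻¹, hmem⟩ : A) = ⟨a', ha'⟩ := by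
    apply hbij.injective
    show (g * a * g⁻¹) • x = a' • x
    rw [mul_smul, mul_smul, inv_smul_eq_iff.mpr hg1.symm, hg2]
  simpa using congrArg Subtype.val this
end

section
/- Let Ψ be a finite irreducible crystallographic root system with base Δ of cardinality m ≥ 1, let W be its Weyl group, let a ∈ Δ, and let W' be the subgroup of W generated by the reflections in the elements of Δ∖{a}. Suppose there IS an enumeration a₁, a₂, …, a_m of Δ with a₁ = a whose Cartan integers satisfy ⟨aᵢ, aⱼ^∨⟩ = −1 whenever |i−j| = 1 and ⟨aᵢ, aⱼ^∨⟩ = 0 whenever |i−j| ≥ 2 (i.e. Ψ is of type A_m and a is an end root of Δ). Then the number of (W',W')-double cosets in W is exactly 2. (Claim verified before Lemma 2 of the paper.) -/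
open Set

/-- A root pairing is irreducible if its set of roots admits no partition into two nonempty
mutually orthogonal parts. -/
def RootPairingIsIrreducible {ι R M N : Type*} [CommRing R] [AddCommGroup M] [Module R M]
    [AddCommGroup N] [Module R N] (P : RootPairing ι R M N) : Prop :=
  ∀ s : Set ι, s.Nonempty → sᶜ.Nonempty → ∃ i ∈ s, ∃ j ∈ sᶜ, P.pairing i j ≠ 0

/-- A root system is a root pairing for which the roots and coroots span their ambient modules
(the definition of Mathlib of December 2024, no longer present as a structure). -/
structure RootSystem (ι R M N : Type*) [CommRing R] [AddCommGroup M] [Module R M]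
    [AddCommGroup N] [Module R N] extends RootPairing ι R M N where
  span_eq_top : Submodule.span R (range root) = ⊤
  span_eq_top' : Submodule.span R (range coroot) = ⊤

/-- The Weyl group of a root system, as a subgroup of linear automorphisms of `M`
(the definition of Mathlib of December 2024). -/
def RootSystem.weylGroup {ι R M N : Type*} [CommRing R] [AddCommGroup M] [Module R M]
    [AddCommGroup N] [Module R N] (P : RootSystem ι R M N) : Subgroup (M ≃ₗ[R] M) :=
  Subgroup.closure (range P.reflection)

/-- A base (set of simple roots) of a root system: a linearly independent set of roots such that
every root is either a nonnegative integer combination or a nonpositive integer combination of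
the roots in the base. -/
structure RootSystemIsBase {ι M N : Type*} [AddCommGroup M] [Module ℝ M]
    [AddCommGroup N] [Module ℝ N] (P : RootSystem ι ℝ M N) (Δ : Set ι) : Prop where
  linearIndependent : LinearIndependent ℝ (fun i : Δ => P.root i)
  pos_or_neg : ∀ i : ι, P.root i ∈ AddSubmonoid.closure (P.root '' Δ) ∨
    -P.root i ∈ AddSubmonoid.closure (P.root '' Δ)

lemma RootSystem.reflection_mem_weylGroup {ι R M N : Type*} [CommRing R] [AddCommGroup M]
    [Module R M] [AddCommGroup N] [Module R N] (P : RootSystem ι R M N) (i : ι) :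
    P.reflection i ∈ P.weylGroup :=
  Subgroup.subset_closure ⟨i, rfl⟩

set_option linter.unusedSectionVars false

namespace ClaimAux

open RootPairing

set_option linter.unusedSectionVars false

variable {ι M N : Type*} [Fintype ι] [AddCommGroup M] [Module ℝ M] [AddCommGroup N] [Module ℝ N]

variable (P : RootSystem ι ℝ M N) (F : ℕ → ι) (m : ℕ)

/-- The `n`-th simple root. -/
noncomputable abbrev ar (n : ℕ) : M := P.root (F n)

/-- The `n`-th simple reflection as an element of the Weyl group. -/
noncomputable def sg (n : ℕ) : P.weylGroup :=
  ⟨P.reflection (F n), P.reflection_mem_weylGroup (F n)⟩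

/-- The coset representatives `c_k = s_{k-1} ⋯ s_1 s_0`. -/
noncomputable def cc : ℕ → P.weylGroup
  | 0 => 1
  | k + 1 => sg P F k * cc k

/-- The "block" root `α_p + α_{p+1} + ⋯ + α_{p+d}`. -/
noncomputable def blk (p d : ℕ) : M := ∑ t ∈ Finset.range (d + 1), ar P F (p + t)

/-- Cartan matrix entries of type `A`. -/
noncomputable def Car (l i : ℕ) : ℝ :=
  if l = i then 2 else if l + 1 = i ∨ i + 1 = l then -1 else 0

/-- The hypothesis that `F` enumerates simple roots of type `A_m`. -/
def IsCartanA : Prop := ∀ l i, l < m → i < m → P.pairing (F l) (F i) = Car l i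

/-- Pairing of a block against a simple coroot. -/
noncomputable def Efun (p q i : ℕ) : ℝ :=
  (if i = p then 1 else 0) + (if i = q then 1 else 0)
    - (if i + 1 = p then 1 else 0) - (if i = q + 1 then 1 else 0)

lemma blk_zero (p : ℕ) : blk P F p 0 = ar P F p := by
  simp [blk]

lemma blk_succ (p d : ℕ) : blk P F p (d + 1) = blk P F p d + ar P F (p + (d + 1)) := by
  simp [blk, Finset.sum_range_succ]

lemma blk_split (p d : ℕ) : blk P F p (d + 1) = ar P F p + blk P F (p + 1) d := by
  rw [blk, Finset.sum_range_succ']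
  simp only [add_zero, blk]
  rw [add_comm]
  congr 1
  refine Finset.sum_congr rfl fun t _ => ?_
  congr 1
  omega

lemma Car_eq_Efun (p i : ℕ) : Car p i = Efun p p i := by
  unfold Car Efun
  split_ifs <;> (first | (exfalso; omega) | norm_num)

lemma Efun_step (p q i : ℕ) (hpq : p ≤ q) :
    Efun p q i + Car (q + 1) i = Efun p (q + 1) i := by
  unfold Car Efun
  split_ifs <;> (first | (exfalso; omega) | norm_num)


section Forms

lemma key_formula (j : ι) (x : M) :
    P.RootForm (P.root j) (P.root j) * P.coroot' j x = 2 * P.RootForm x (P.root j) := by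
  have h : (P.RootForm (P.root j) (P.root j)) • (P.coroot' j : M →ₗ[ℝ] ℝ)
      = (2 : ℝ) • ((P.RootForm).flip (P.root j)) := by
    apply LinearMap.ext_on P.span_eq_top
    rintro - ⟨i, rfl⟩
    have h2 : 2 * P.RootForm (P.root i) (P.root j)
        = P.pairing i j * P.RootForm (P.root j) (P.root j) :=
      (P.posRootForm ℝ).two_mul_apply_root_root i j
    simp only [LinearMap.smul_apply, LinearMap.flip_apply, smul_eq_mul,
      RootPairing.root_coroot'_eq_pairing]
    have hf : (P.RootForm.flip (P.root j)) (P.root i) = P.RootForm (P.root i) (P.root j) := rfl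
    rw [hf]
    rw [show P.toLinearMap (P.root i) (P.coroot j) = P.pairing i j from rfl]
    linear_combination -h2
  have := congrFun (congrArg DFunLike.coe h) x
  simpa [smul_eq_mul, mul_comm] using this

lemma rootForm_weyl_invariant {g : M ≃ₗ[ℝ] M} (hg : g ∈ P.weylGroup) (x y : M) :
    P.RootForm (g x) (g y) = P.RootForm x y := by
  revert x y
  refine Subgroup.closure_induction
    (p := fun g _ => ∀ x y : M, P.RootForm (g x) (g y) = P.RootForm x y) ?_ ?_ ?_ ?_ hg
  · rintro - ⟨i, rfl⟩ x y
    exact P.toRootPairing.rootForm_reflection_reflection_apply i x y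
  · intro x y; rfl
  · intro w₁ w₂ _ _ h₁ h₂ x y
    have : ∀ z : M, (w₁ * w₂) z = w₁ (w₂ z) := fun z => rfl
    rw [this x, this y, h₁, h₂]
  · intro w _ hw x y
    have hx : ∀ z : M, w ((w⁻¹ : M ≃ₗ[ℝ] M) z) = z := fun z => w.apply_symm_apply z
    calc P.RootForm ((w⁻¹ : M ≃ₗ[ℝ] M) x) ((w⁻¹ : M ≃ₗ[ℝ] M) y)
        = P.RootForm (w ((w⁻¹ : M ≃ₗ[ℝ] M) x)) (w ((w⁻¹ : M ≃ₗ[ℝ] M) y)) := (hw _ _).symm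
      _ = P.RootForm x y := by rw [hx, hx]

/-- Conjugating a reflection by a Weyl group element sending one root line to another. -/
lemma reflection_conj {g : M ≃ₗ[ℝ] M} (hg : g ∈ P.weylGroup) {i j : ι} {r : ℝ} (hr : r ≠ 0)
    (hgi : g (P.root i) = r • P.root j) :
    g * P.reflection i * g⁻¹ = P.reflection j := by
  have hBjj : P.RootForm (P.root j) (P.root j) ≠ 0 :=
    (P.posRootForm ℝ).form_apply_root_ne_zero j
  apply LinearEquiv.toLinearMap_injective
  ext x
  have happ : (g * P.reflection i * g⁻¹) x = g (P.reflection i ((g⁻¹ : M ≃ₗ[ℝ] M) x)) := rfl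
  have hinvx : ∀ z : M, g ((g⁻¹ : M ≃ₗ[ℝ] M) z) = z := fun z => g.apply_symm_apply z
  set y := (g⁻¹ : M ≃ₗ[ℝ] M) x with hy
  have h1 : P.RootForm (P.root i) (P.root i) * P.coroot' i y
      = 2 * P.RootForm y (P.root i) := key_formula P i y
  have h2 : P.RootForm y (P.root i) = r * P.RootForm x (P.root j) := by
    have := rootForm_weyl_invariant P hg y (P.root i)
    rw [hgi, hinvx] at this
    rw [← this]
    simp [mul_comm]
  have h3 : P.RootForm (P.root i) (P.root i)
      = r * r * P.RootForm (P.root j) (P.root j) := by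
    have := rootForm_weyl_invariant P hg (P.root i) (P.root i)
    rw [hgi] at this
    rw [← this]
    simp [smul_smul, mul_assoc, mul_comm, mul_left_comm]
  have h4 : P.RootForm (P.root j) (P.root j) * P.coroot' j x
      = 2 * P.RootForm x (P.root j) := key_formula P j x
  have hrc : r * P.coroot' i y = P.coroot' j x := by
    have hmain : (r * P.RootForm (P.root j) (P.root j)) * (r * P.coroot' i y)
        = (r * P.RootForm (P.root j) (P.root j)) * P.coroot' j x := by
      linear_combination (P.coroot' i y) * h3.symm + h1 + 2 * h2 + (-r) * h4
    exact mul_left_cancel₀ (mul_ne_zero hr hBjj) hmain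
  have hrefl : P.reflection i y = y - (P.coroot' i y) • P.root i :=
    P.toRootPairing.reflection_apply i y
  calc (g * P.reflection i * g⁻¹) x
      = g (P.reflection i y) := happ
    _ = g y - (P.coroot' i y) • g (P.root i) := by rw [hrefl, map_sub, map_smul]
    _ = x - (P.coroot' i y) • (r • P.root j) := by rw [hgi, hy, hinvx]
    _ = x - (P.coroot' j x) • P.root j := by rw [smul_smul, mul_comm, hrc]
    _ = P.reflection j x := (P.toRootPairing.reflection_apply j x).symm

end Forms


section Blocks

lemma pairing_ar (hC : IsCartanA P F m) {l i : ℕ} (hl : l < m) (hi : i < m) :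
    P.coroot' (F i) (ar P F l) = Car l i := by
  have h : P.coroot' (F i) (P.root (F l)) = P.pairing (F l) (F i) := by simp
  rw [ar, h, hC l i hl hi]

lemma pairing_blk (hC : IsCartanA P F m) {p d i : ℕ} (hpd : p + d < m) (hi : i < m) :
    P.coroot' (F i) (blk P F p d) = Efun p (p + d) i := by
  induction d with
  | zero =>
    rw [blk_zero, pairing_ar P F m hC (by omega) hi, add_zero, Car_eq_Efun]
  | succ d ih =>
    rw [blk_succ, map_add, ih (by omega), pairing_ar P F m hC (by omega) hi]
    have : p + (d + 1) = (p + d) + 1 := by omega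
    rw [this, Efun_step p (p + d) i (by omega)]

lemma refl_blk (hC : IsCartanA P F m) {i p d : ℕ} (hpd : p + d < m) (hi : i < m) :
    ∃ (p' d' : ℕ) (ε : ℝ), p' + d' < m ∧ ε ≠ 0 ∧
      P.reflection (F i) (blk P F p d) = ε • blk P F p' d' := by
  have hrefl : P.reflection (F i) (blk P F p d)
      = blk P F p d - (Efun p (p + d) i) • ar P F i := by
    rw [RootPairing.reflection_apply, pairing_blk P F m hC hpd hi]
  rcases Nat.lt_trichotomy i p with hip | rfl | hpi
  · by_cases hadj : i + 1 = p
    · refine ⟨i, d + 1, 1, by omega, one_ne_zero, ?_⟩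
      have hEv : Efun p (p + d) i = -1 := by
        unfold Efun; split_ifs <;> (first | (exfalso; omega) | norm_num)
      rw [hrefl, hEv, one_smul]
      have hs := blk_split P F i d
      rw [hadj] at hs
      rw [hs]; module
    · refine ⟨p, d, 1, hpd, one_ne_zero, ?_⟩
      have hEv : Efun p (p + d) i = 0 := by
        unfold Efun; split_ifs <;> (first | (exfalso; omega) | norm_num)
      rw [hrefl, hEv, one_smul]; module
  · rcases Nat.eq_zero_or_pos d with rfl | hd
    · refine ⟨i, 0, -1, by omega, by norm_num, ?_⟩
      have hEv : Efun i (i + 0) i = 2 := by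
        unfold Efun; split_ifs <;> (first | (exfalso; omega) | norm_num)
      rw [hrefl, hEv, blk_zero]; module
    · refine ⟨i + 1, d - 1, 1, by omega, one_ne_zero, ?_⟩
      have hEv : Efun i (i + d) i = 1 := by
        unfold Efun; split_ifs <;> (first | (exfalso; omega) | norm_num)
      rw [hrefl, hEv, one_smul]
      have hs := blk_split P F i (d - 1)
      rw [show d - 1 + 1 = d from by omega] at hs
      rw [hs]; module
  · by_cases hiq : i ≤ p + d
    · by_cases hieq : i = p + d
      · refine ⟨p, d - 1, 1, by omega, one_ne_zero, ?_⟩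
        have hd : 0 < d := by omega
        have hEv : Efun p (p + d) i = 1 := by
          unfold Efun; split_ifs <;> (first | (exfalso; omega) | norm_num)
        rw [hrefl, hEv, one_smul]
        have hs := blk_succ P F p (d - 1)
        rw [show d - 1 + 1 = d from by omega] at hs
        rw [hs, show p + d = i from by omega]; module
      · refine ⟨p, d, 1, hpd, one_ne_zero, ?_⟩
        have hEv : Efun p (p + d) i = 0 := by
          unfold Efun; split_ifs <;> (first | (exfalso; omega) | norm_num)
        rw [hrefl, hEv, one_smul]; module
    · by_cases hadj : i = p + d + 1
      · refine ⟨p, d + 1, 1, by omega, one_ne_zero, ?_⟩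
        have hEv : Efun p (p + d) i = -1 := by
          unfold Efun; split_ifs <;> (first | (exfalso; omega) | norm_num)
        rw [hrefl, hEv]
        have hs := blk_succ P F p d
        rw [hs, show p + (d + 1) = i from by omega]; module
      · refine ⟨p, d, 1, hpd, one_ne_zero, ?_⟩
        have hEv : Efun p (p + d) i = 0 := by
          unfold Efun; split_ifs <;> (first | (exfalso; omega) | norm_num)
        rw [hrefl, hEv, one_smul]; module

end Blocks


section Classification

lemma root_eq_smul_blk_of_pos (hC : IsCartanA P F m)
    (hLI : ∀ c : ℕ → ℝ, (∑ n ∈ Finset.range m, c n • ar P F n) = 0 → ∀ n, n < m → c n = 0)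
    (hPos : ∀ j : ι, (∃ c : ℕ → ℕ, P.root j = ∑ n ∈ Finset.range m, (c n : ℝ) • ar P F n) ∨
      (∃ c : ℕ → ℕ, P.root j = -∑ n ∈ Finset.range m, (c n : ℝ) • ar P F n)) :
    ∀ (ht : ℕ) (j : ι) (c : ℕ → ℕ), (∑ n ∈ Finset.range m, c n) = ht →
      P.root j = ∑ n ∈ Finset.range m, (c n : ℝ) • ar P F n →
      ∃ (p d : ℕ) (r : ℝ), p + d < m ∧ r ≠ 0 ∧ P.root j = r • blk P F p d := by
  intro ht
  induction ht using Nat.strong_induction_on with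
  | _ ht IH =>
  intro j c hsum hroot
  have h2 : (2 : ℝ) = ∑ l ∈ Finset.range m, (c l : ℝ) * P.pairing (F l) j := by
    have hp : P.coroot' j (P.root j) = 2 := by simp
    rw [hroot, map_sum] at hp
    rw [← hp]
    refine Finset.sum_congr rfl fun l _ => ?_
    rw [map_smul]
    simp [smul_eq_mul]
  have hex : ∃ l, l < m ∧ 0 < c l ∧ 0 < P.pairing (F l) j := by
    by_contra hcon
    push_neg at hcon
    have hterm : ∀ l ∈ Finset.range m, (c l : ℝ) * P.pairing (F l) j ≤ 0 := by
      intro l hl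
      rcases Nat.eq_zero_or_pos (c l) with h0 | h0
      · simp [h0]
      · exact mul_nonpos_of_nonneg_of_nonpos (by positivity)
          (hcon l (Finset.mem_range.mp hl) h0)
    have hs := Finset.sum_nonpos hterm
    rw [← h2] at hs; norm_num at hs
  obtain ⟨l, hl, hcl, hpl⟩ := hex
  have hk : 0 < P.pairing j (F l) :=
    by
      have e : ∀ a b : ι, P.pairingIn ℝ a b = P.pairing a b := fun a b => by
        have := P.algebraMap_pairingIn ℝ a b
        rwa [Algebra.algebraMap_self, RingHom.id_apply] at this
      have h1 := (P.zero_lt_pairingIn_iff' ℝ (i := F l) (j := j)).mp (by rw [e]; exact hpl)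
      rwa [e] at h1
  by_cases hone : ∀ l2, l2 < m → l2 ≠ l → c l2 = 0
  · refine ⟨l, 0, (c l : ℝ), by omega, Nat.cast_ne_zero.mpr (by omega), ?_⟩
    rw [blk_zero, hroot]
    rw [Finset.sum_eq_single_of_mem l (Finset.mem_range.mpr hl)]
    intro b hb hbl
    rw [hone b (Finset.mem_range.mp hb) hbl]; simp
  · push_neg at hone
    obtain ⟨l2, hl2m, hl2ne, hcl2⟩ := hone
    set k := P.pairing j (F l) with hkdef
    have hrootj' : P.root (P.reflectionPerm (F l) j) = P.root j - k • ar P F l := by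
      rw [RootPairing.root_reflectionPerm, RootPairing.reflection_apply_root]
    have hksum : k • ar P F l = ∑ n ∈ Finset.range m, (if n = l then k else 0) • ar P F n := by
      have he : ∀ n, ((if n = l then k else 0) : ℝ) • ar P F n
          = (if n = l then k • ar P F n else 0) := by
        intro n; split_ifs <;> simp
      simp_rw [he]
      rw [Finset.sum_ite_eq' (Finset.range m) l]
      simp [Finset.mem_range.mpr hl]
    rcases hPos (P.reflectionPerm (F l) j) with ⟨c', hc'⟩ | ⟨dn, hdn⟩
    · -- positive coordinates for the reflected root
      have hdiff : ∑ n ∈ Finset.range m,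
          (((c' n : ℝ) - (c n : ℝ)) + (if n = l then k else 0)) • ar P F n = 0 := by
        have expand : ∑ n ∈ Finset.range m,
            (((c' n : ℝ) - (c n : ℝ)) + (if n = l then k else 0)) • ar P F n
            = (∑ n ∈ Finset.range m, (c' n : ℝ) • ar P F n)
              - (∑ n ∈ Finset.range m, (c n : ℝ) • ar P F n)
              + (∑ n ∈ Finset.range m, (if n = l then k else 0) • ar P F n) := by
          simp only [sub_smul, add_smul]
          rw [Finset.sum_add_distrib, Finset.sum_sub_distrib]
        rw [expand, ← hc', ← hroot, ← hksum, hrootj']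
        abel
      have hcoord := fun n hn => hLI _ hdiff n hn
      have hcc : ∀ n, n < m → n ≠ l → c' n = c n := by
        intro n hn hnl
        have := hcoord n hn
        rw [if_neg hnl] at this
        have : (c' n : ℝ) = (c n : ℝ) := by linarith
        exact_mod_cast this
      have hccl : (c' l : ℝ) = (c l : ℝ) - k := by
        have := hcoord l hl
        rw [if_pos rfl] at this
        linarith
      have hcll : c' l < c l := by
        have : (c' l : ℝ) < (c l : ℝ) := by rw [hccl]; linarith
        exact_mod_cast this
      have hlt : (∑ n ∈ Finset.range m, c' n) < ∑ n ∈ Finset.range m, c n := by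
        apply Finset.sum_lt_sum
        · intro n hn
          by_cases hnl : n = l
          · subst hnl; omega
          · rw [hcc n (Finset.mem_range.mp hn) hnl]
        · exact ⟨l, Finset.mem_range.mpr hl, hcll⟩
      obtain ⟨p, d, r, hpd, hr, hblk⟩ := IH _ (hsum ▸ hlt) (P.reflectionPerm (F l) j) c' rfl hc'
      have hback : P.root j = P.reflection (F l) (P.root (P.reflectionPerm (F l) j)) := by
        rw [RootPairing.root_reflectionPerm, RootPairing.reflection_same]
      obtain ⟨p', d', ε, hpd', hε, hact⟩ := refl_blk P F m hC hpd hl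
      refine ⟨p', d', r * ε, hpd', mul_ne_zero hr hε, ?_⟩
      rw [hback, hblk, map_smul, hact, smul_smul]
    · -- negative coordinates: impossible
      exfalso
      have hdiff : ∑ n ∈ Finset.range m,
          (((c n : ℝ) + (dn n : ℝ)) - (if n = l then k else 0)) • ar P F n = 0 := by
        have expand : ∑ n ∈ Finset.range m,
            (((c n : ℝ) + (dn n : ℝ)) - (if n = l then k else 0)) • ar P F n
            = (∑ n ∈ Finset.range m, (c n : ℝ) • ar P F n)
              + (∑ n ∈ Finset.range m, (dn n : ℝ) • ar P F n)
              - (∑ n ∈ Finset.range m, (if n = l then k else 0) • ar P F n) := by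
          simp only [sub_smul, add_smul]
          rw [Finset.sum_sub_distrib, Finset.sum_add_distrib]
        have hdsum : (∑ n ∈ Finset.range m, (dn n : ℝ) • ar P F n)
            = - P.root (P.reflectionPerm (F l) j) := by
          rw [hdn, neg_neg]
        rw [expand, hdsum, ← hroot, ← hksum, hrootj']
        abel
      have h0 := hLI _ hdiff l2 hl2m
      rw [if_neg hl2ne] at h0
      have hd0 : (0 : ℝ) ≤ (dn l2 : ℝ) := Nat.cast_nonneg _
      have hc0 : (0 : ℝ) ≤ (c l2 : ℝ) := Nat.cast_nonneg _
      have : (c l2 : ℝ) = 0 := by linarith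
      exact hcl2 (by exact_mod_cast this)

lemma root_eq_smul_blk (hC : IsCartanA P F m)
    (hLI : ∀ c : ℕ → ℝ, (∑ n ∈ Finset.range m, c n • ar P F n) = 0 → ∀ n, n < m → c n = 0)
    (hPos : ∀ j : ι, (∃ c : ℕ → ℕ, P.root j = ∑ n ∈ Finset.range m, (c n : ℝ) • ar P F n) ∨
      (∃ c : ℕ → ℕ, P.root j = -∑ n ∈ Finset.range m, (c n : ℝ) • ar P F n))
    (j : ι) :
    ∃ (p d : ℕ) (r : ℝ), p + d < m ∧ r ≠ 0 ∧ P.root j = r • blk P F p d := by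
  rcases hPos j with ⟨c, hc⟩ | ⟨c, hc⟩
  · exact root_eq_smul_blk_of_pos P F m hC hLI hPos _ j c rfl hc
  · have hneg : P.root (P.reflectionPerm j j) = ∑ n ∈ Finset.range m, (c n : ℝ) • ar P F n := by
      rw [RootPairing.root_reflectionPerm, RootPairing.reflection_apply_self, hc, neg_neg]
    obtain ⟨p, d, r, hpd, hr, hblk⟩ :=
      root_eq_smul_blk_of_pos P F m hC hLI hPos _ (P.reflectionPerm j j) c rfl hneg
    refine ⟨p, d, -r, hpd, neg_ne_zero.mpr hr, ?_⟩
    have : P.root j = - P.root (P.reflectionPerm j j) := by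
      rw [RootPairing.root_reflectionPerm, RootPairing.reflection_apply_self, neg_neg]
    rw [this, hblk, neg_smul]

end Classification


section Group

lemma cc_succ (k : ℕ) : cc P F (k + 1) = sg P F k * cc P F k := rfl

lemma sg_mul_self (n : ℕ) : sg P F n * sg P F n = 1 := by
  apply Subtype.ext
  apply LinearEquiv.toLinearMap_injective
  ext x
  exact P.toRootPairing.reflection_same (F n) x

lemma sg_inv (n : ℕ) : (sg P F n)⁻¹ = sg P F n :=
  inv_eq_of_mul_eq_one_right (sg_mul_self P F n)

lemma refl_ar (hC : IsCartanA P F m) {l i : ℕ} (hl : l < m) (hi : i < m) :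
    P.reflection (F i) (ar P F l) = ar P F l - Car l i • ar P F i := by
  rw [RootPairing.reflection_apply, pairing_ar P F m hC hl hi]

lemma refl_ar_far (hC : IsCartanA P F m) {l i : ℕ} (hl : l < m) (hi : i < m)
    (h1 : l ≠ i) (h2 : l + 1 ≠ i) (h3 : i + 1 ≠ l) :
    P.reflection (F i) (ar P F l) = ar P F l := by
  rw [refl_ar P F m hC hl hi]
  have : Car l i = 0 := by unfold Car; split_ifs <;> (first | (exfalso; omega) | norm_num)
  rw [this, zero_smul, sub_zero]

lemma refl_ar_adj (hC : IsCartanA P F m) {l i : ℕ} (hl : l < m) (hi : i < m)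
    (h : l + 1 = i ∨ i + 1 = l) :
    P.reflection (F i) (ar P F l) = ar P F l + ar P F i := by
  rw [refl_ar P F m hC hl hi]
  have : Car l i = -1 := by unfold Car; split_ifs <;> (first | (exfalso; omega) | norm_num)
  rw [this]; module

/-- The products of simple reflections building up a block. -/
noncomputable def gblk (p d : ℕ) : P.weylGroup :=
  ((List.range d).reverse.map (fun t => sg P F (p + t + 1))).prod

lemma gblk_zero (p : ℕ) : gblk P F p 0 = 1 := rfl

lemma gblk_succ (p d : ℕ) : gblk P F p (d + 1) = sg P F (p + d + 1) * gblk P F p d := by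
  unfold gblk
  rw [List.range_succ, List.reverse_append]
  simp

lemma gblk_apply (hC : IsCartanA P F m) {p d : ℕ} (hpd : p + d < m) :
    ((gblk P F p d : P.weylGroup) : M ≃ₗ[ℝ] M) (ar P F p) = blk P F p d := by
  induction d with
  | zero => rw [gblk_zero, blk_zero]; rfl
  | succ d ih =>
    rw [gblk_succ]
    have happ : ((↑(sg P F (p + d + 1) * gblk P F p d) : M ≃ₗ[ℝ] M)) (ar P F p)
        = P.reflection (F (p + d + 1)) (((gblk P F p d : P.weylGroup) : M ≃ₗ[ℝ] M) (ar P F p)) :=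
      rfl
    rw [happ, ih (by omega)]
    rw [RootPairing.reflection_apply, pairing_blk P F m hC (by omega) (by omega)]
    have hE : Efun p (p + d) (p + d + 1) = -1 := by
      unfold Efun; split_ifs <;> (first | (exfalso; omega) | norm_num)
    rw [hE, blk_succ]
    rw [show p + (d + 1) = p + d + 1 from by omega]
    module

/-- The set of simple reflections inside the Weyl group. -/
def Ssig : Set P.weylGroup := {w | ∃ n, n < m ∧ w = sg P F n}

lemma gblk_mem {p d : ℕ} (hpd : p + d < m) :
    gblk P F p d ∈ Subgroup.closure (Ssig P F m) := by
  induction d with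
  | zero => rw [gblk_zero]; exact one_mem _
  | succ d ih =>
    rw [gblk_succ]
    exact mul_mem (Subgroup.subset_closure ⟨p + d + 1, by omega, rfl⟩) (ih (by omega))

lemma closure_ssig_eq_top (hC : IsCartanA P F m)
    (hLI : ∀ c : ℕ → ℝ, (∑ n ∈ Finset.range m, c n • ar P F n) = 0 → ∀ n, n < m → c n = 0)
    (hPos : ∀ j : ι, (∃ c : ℕ → ℕ, P.root j = ∑ n ∈ Finset.range m, (c n : ℝ) • ar P F n) ∨
      (∃ c : ℕ → ℕ, P.root j = -∑ n ∈ Finset.range m, (c n : ℝ) • ar P F n)) :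
    Subgroup.closure (Ssig P F m) = ⊤ := by
  rw [eq_top_iff]
  rintro g -
  have main : ∀ (x : M ≃ₗ[ℝ] M) (hx : x ∈ Subgroup.closure (Set.range P.reflection)),
      (⟨x, hx⟩ : P.weylGroup) ∈ Subgroup.closure (Ssig P F m) := by
    intro x hx
    induction hx using Subgroup.closure_induction with
    | mem x hxm =>
      obtain ⟨j, rfl⟩ := hxm
      obtain ⟨p, d, r, hpd, hr, hblk⟩ := root_eq_smul_blk P F m hC hLI hPos j
      have hginv : ((gblk P F p d : P.weylGroup) : M ≃ₗ[ℝ] M) (P.root (F p))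
          = r⁻¹ • P.root j := by
        rw [gblk_apply P F m hC hpd, hblk, smul_smul, inv_mul_cancel₀ hr, one_smul]
      have hconj := reflection_conj P (g := ((gblk P F p d : P.weylGroup) : M ≃ₗ[ℝ] M))
        (gblk P F p d).2 (inv_ne_zero hr) hginv
      have hco : ((gblk P F p d * sg P F p * (gblk P F p d)⁻¹ : P.weylGroup) : M ≃ₗ[ℝ] M)
          = ((gblk P F p d : P.weylGroup) : M ≃ₗ[ℝ] M) * P.reflection (F p)
            * (((gblk P F p d : P.weylGroup) : M ≃ₗ[ℝ] M))⁻¹ := rfl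
      have : (⟨P.reflection j, P.reflection_mem_weylGroup j⟩ : P.weylGroup)
          = gblk P F p d * sg P F p * (gblk P F p d)⁻¹ := by
        apply Subtype.ext
        rw [hco, hconj]
      rw [show (⟨P.reflection j, _⟩ : P.weylGroup)
          = gblk P F p d * sg P F p * (gblk P F p d)⁻¹ from this]
      exact mul_mem (mul_mem (gblk_mem P F m (by omega))
        (Subgroup.subset_closure ⟨p, by omega, rfl⟩)) (inv_mem (gblk_mem P F m (by omega)))
    | one => exact one_mem _
    | mul x y hx hy hx' hy' => exact mul_mem hx' hy'
    | inv x hx hx' => exact inv_mem hx'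
  have := main (↑g) g.2
  simpa using this

end Group


section CC

lemma cc_inv_step (k : ℕ) (x : M) :
    (((cc P F (k + 1))⁻¹ : P.weylGroup) : M ≃ₗ[ℝ] M) x
      = (((cc P F k)⁻¹ : P.weylGroup) : M ≃ₗ[ℝ] M) (P.reflection (F k) x) := by
  have h1 : (cc P F (k + 1))⁻¹ = (cc P F k)⁻¹ * (sg P F k)⁻¹ := by
    rw [cc_succ, mul_inv_rev]
  rw [h1, sg_inv]
  rfl

lemma cc_inv (hC : IsCartanA P F m) :
    ∀ k, k ≤ m →
      (∀ i, k + 1 ≤ i → i < m →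
        (((cc P F k)⁻¹ : P.weylGroup) : M ≃ₗ[ℝ] M) (ar P F i) = ar P F i) ∧
      (k < m → (((cc P F k)⁻¹ : P.weylGroup) : M ≃ₗ[ℝ] M) (ar P F k) = blk P F 0 k) ∧
      (∀ k', k = k' + 1 → (((cc P F k)⁻¹ : P.weylGroup) : M ≃ₗ[ℝ] M) (ar P F k')
        = - blk P F 0 k') ∧
      (∀ i, i + 2 ≤ k → (((cc P F k)⁻¹ : P.weylGroup) : M ≃ₗ[ℝ] M) (ar P F i)
        = ar P F (i + 1)) := by
  intro k
  induction k with
  | zero =>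
    intro _
    refine ⟨fun i _ _ => by simp [cc], fun h0 => ?_, fun k' hk' => by omega,
      fun i hi => by omega⟩
    · rw [blk_zero]; simp [cc]
  | succ k ih =>
    intro hk1
    obtain ⟨ihA, ihC, ihD, ihB⟩ := ih (by omega)
    have hkm : k < m := by omega
    refine ⟨?_, ?_, ?_, ?_⟩
    · -- (A) i ≥ k + 2
      intro i hi him
      rw [cc_inv_step, refl_ar_far P F m hC him hkm (by omega) (by omega) (by omega)]
      exact ihA i (by omega) him
    · -- (C) blk 0 (k+1)
      intro hk1m
      rw [cc_inv_step, refl_ar_adj P F m hC hk1m hkm (Or.inr rfl), map_add]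
      rw [ihA (k + 1) (by omega) hk1m, ihC hkm]
      rw [blk_succ, show 0 + (k + 1) = k + 1 from by omega]
      abel
    · -- (D) k' = k
      intro k' hk'
      have hkk : k' = k := by omega
      rw [hkk]
      have hrefl : P.reflection (F k) (ar P F k) = - ar P F k :=
        P.toRootPairing.reflection_apply_self (F k)
      rw [cc_inv_step, hrefl, map_neg, ihC hkm]
    · -- (B) i + 2 ≤ k + 1
      intro i hi
      have him : i < m := by omega
      by_cases hik : i + 2 ≤ k
      · rw [cc_inv_step, refl_ar_far P F m hC him hkm (by omega) (by omega) (by omega)]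
        exact ihB i hik
      · -- i + 1 = k
        have hik1 : i + 1 = k := by omega
        rw [cc_inv_step, refl_ar_adj P F m hC him hkm (Or.inl hik1), map_add]
        rw [ihD i (by omega), ihC hkm]
        rw [← hik1, blk_succ, show 0 + (i + 1) = i + 1 from by omega]
        abel

lemma sg_mul_cc (hC : IsCartanA P F m) {W' : Subgroup P.weylGroup}
    (hgen : ∀ n, 1 ≤ n → n < m → sg P F n ∈ W') {i k : ℕ} (hi : i < m) (hk : k ≤ m) :
    ∃ k', k' ≤ m ∧ ∃ w ∈ W', sg P F i * cc P F k = cc P F k' * w := by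
  by_cases hki : k = i
  · subst hki
    exact ⟨k + 1, by omega, 1, one_mem _, by rw [cc_succ, mul_one]⟩
  by_cases hki1 : k = i + 1
  · subst hki1
    refine ⟨i, by omega, 1, one_mem _, ?_⟩
    rw [mul_one, cc_succ, ← mul_assoc, sg_mul_self, one_mul]
  · -- k ∉ {i, i+1} : conjugation
    obtain ⟨hA, hC', hD, hB⟩ := cc_inv P F m hC k hk
    have hwg : (((cc P F k)⁻¹ : P.weylGroup) : M ≃ₗ[ℝ] M) ∈ P.weylGroup := ((cc P F k)⁻¹).2
    have key : ∃ i', 1 ≤ i' ∧ i' < m ∧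
        (((cc P F k)⁻¹ : P.weylGroup) : M ≃ₗ[ℝ] M) (ar P F i) = ar P F i' := by
      rcases Nat.lt_or_ge k i with hlt | hge
      · exact ⟨i, by omega, hi, hA i (by omega) hi⟩
      · have : i + 2 ≤ k := by omega
        exact ⟨i + 1, by omega, by omega, hB i this⟩
    obtain ⟨i', hi'1, hi'm, hact⟩ := key
    have hact' : (((cc P F k)⁻¹ : P.weylGroup) : M ≃ₗ[ℝ] M) (P.root (F i))
        = (1 : ℝ) • P.root (F i') := by rw [one_smul]; exact hact
    have hconj := reflection_conj P (g := (((cc P F k)⁻¹ : P.weylGroup) : M ≃ₗ[ℝ] M))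
      hwg one_ne_zero hact'
    have hw : (cc P F k)⁻¹ * sg P F i * cc P F k = sg P F i' := by
      apply Subtype.ext
      have hco : (((cc P F k)⁻¹ * sg P F i * cc P F k : P.weylGroup) : M ≃ₗ[ℝ] M)
          = (((cc P F k)⁻¹ : P.weylGroup) : M ≃ₗ[ℝ] M) * P.reflection (F i)
            * ((((cc P F k)⁻¹ : P.weylGroup) : M ≃ₗ[ℝ] M))⁻¹ := by
        have : ((((cc P F k)⁻¹ : P.weylGroup) : M ≃ₗ[ℝ] M))⁻¹
            = ((cc P F k : P.weylGroup) : M ≃ₗ[ℝ] M) := by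
          simp
        rw [this]
        rfl
      rw [hco, hconj]
      rfl
    refine ⟨k, hk, sg P F i', hgen i' hi'1 hi'm, ?_⟩
    calc sg P F i * cc P F k = cc P F k * ((cc P F k)⁻¹ * sg P F i * cc P F k) := by group
      _ = cc P F k * sg P F i' := by rw [hw]

end CC


section Cover

lemma cover (hC : IsCartanA P F m)
    (hLI : ∀ c : ℕ → ℝ, (∑ n ∈ Finset.range m, c n • ar P F n) = 0 → ∀ n, n < m → c n = 0)
    (hPos : ∀ j : ι, (∃ c : ℕ → ℕ, P.root j = ∑ n ∈ Finset.range m, (c n : ℝ) • ar P F n) ∨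
      (∃ c : ℕ → ℕ, P.root j = -∑ n ∈ Finset.range m, (c n : ℝ) • ar P F n))
    {W' : Subgroup P.weylGroup}
    (hgen : ∀ n, 1 ≤ n → n < m → sg P F n ∈ W') (g : P.weylGroup) :
    ∃ k, k ≤ m ∧ ∃ w ∈ W', g = cc P F k * w := by
  set U : Set P.weylGroup := {g | ∃ k, k ≤ m ∧ ∃ w ∈ W', g = cc P F k * w} with hU
  have h1U : (1 : P.weylGroup) ∈ U := ⟨0, by omega, 1, one_mem _, by simp [cc]⟩
  have hsgU : ∀ n, n < m → ∀ u ∈ U, sg P F n * u ∈ U := by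
    intro n hn u hu
    obtain ⟨k, hk, w, hw, rfl⟩ := hu
    obtain ⟨k', hk', w', hw', heq⟩ := sg_mul_cc P F m hC hgen hn hk
    exact ⟨k', hk', w' * w, mul_mem hw' hw, by rw [← mul_assoc, heq, mul_assoc]⟩
  have htop := closure_ssig_eq_top P F m hC hLI hPos
  have hg : g ∈ Subgroup.closure (Ssig P F m) := htop ▸ Subgroup.mem_top g
  have main : ∀ u ∈ U, g * u ∈ U ∧ g⁻¹ * u ∈ U := by
    induction hg using Subgroup.closure_induction with
    | mem x hx =>
      obtain ⟨n, hn, rfl⟩ := hx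
      intro u hu
      refine ⟨hsgU n hn u hu, ?_⟩
      rw [sg_inv]; exact hsgU n hn u hu
    | one =>
      intro u hu
      exact ⟨by simpa using hu, by simpa using hu⟩
    | mul x y hx hy hx' hy' =>
      intro u hu
      constructor
      · have h1 := (hy' u hu).1
        have h2 := (hx' _ h1).1
        rwa [← mul_assoc] at h2
      · have h1 := (hx' u hu).2
        have h2 := (hy' _ h1).2
        rw [mul_inv_rev, mul_assoc]
        exact h2
    | inv x hx hx' =>
      intro u hu
      refine ⟨(hx' u hu).2, ?_⟩
      have := (hx' u hu).1
      simpa using this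
  have hfin := (main 1 h1U).1
  rw [mul_one] at hfin
  exact hfin

lemma cc_decomp {W' : Subgroup P.weylGroup}
    (hgen : ∀ n, 1 ≤ n → n < m → sg P F n ∈ W') :
    ∀ k, 1 ≤ k → k ≤ m → ∃ u ∈ W', cc P F k = u * sg P F 0 := by
  intro k
  induction k with
  | zero => omega
  | succ k ih =>
    intro _ hk1
    rcases Nat.eq_zero_or_pos k with rfl | hk
    · refine ⟨1, one_mem _, ?_⟩
      rw [one_mul, cc_succ, show cc P F 0 = (1 : P.weylGroup) from rfl, mul_one]
    · obtain ⟨u, hu, hcc⟩ := ih hk (by omega)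
      exact ⟨sg P F k * u, mul_mem (hgen k hk (by omega)) hu,
        by rw [cc_succ, hcc, mul_assoc]⟩

end Cover

section NotMem

lemma sg_zero_not_mem {Δ : Set ι} {f : Fin m ≃ Δ} {a : ι}
    (hm : 0 < m)
    (hF : ∀ n (h : n < m), F n = ((f ⟨n, h⟩ : Δ) : ι))
    (ha0 : ((f ⟨0, hm⟩ : Δ) : ι) = a)
    (hli : LinearIndependent ℝ (fun i : Δ => P.root (i : ι)))
    {W' : Subgroup P.weylGroup}
    (hW' : W' = Subgroup.closure
      {w : P.weylGroup | ∃ i ∈ Δ \ {a}, (w : M ≃ₗ[ℝ] M) = P.reflection i}) :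
    sg P F 0 ∉ W' := by
  classical
  set v : Fin m → M := fun n => P.root ((f n : Δ) : ι) with hv
  have hliv : LinearIndependent ℝ v := hli.comp (fun n => f n) f.injective
  set V' : Submodule ℝ M := Submodule.span ℝ (v '' {n : Fin m | n ≠ ⟨0, hm⟩}) with hV'
  have hnm : v ⟨0, hm⟩ ∉ V' := hliv.notMem_span_image (by simp)
  set H : Subgroup P.weylGroup :=
    { carrier := {g : P.weylGroup | ∀ x : M, (g : M ≃ₗ[ℝ] M) x - x ∈ V'}
      one_mem' := by intro x; simpa using Submodule.zero_mem V'
      mul_mem' := by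
        intro g h hg hh x
        have hmu : ((g * h : P.weylGroup) : M ≃ₗ[ℝ] M) x
            = (g : M ≃ₗ[ℝ] M) ((h : M ≃ₗ[ℝ] M) x) := rfl
        have hdecomp : ((g * h : P.weylGroup) : M ≃ₗ[ℝ] M) x - x
            = ((g : M ≃ₗ[ℝ] M) ((h : M ≃ₗ[ℝ] M) x) - (h : M ≃ₗ[ℝ] M) x)
              + ((h : M ≃ₗ[ℝ] M) x - x) := by rw [hmu]; abel
        rw [hdecomp]
        exact add_mem (hg _) (hh x)
      inv_mem' := by
        intro g hg x
        have h1 : (g : M ≃ₗ[ℝ] M) (((g⁻¹ : P.weylGroup) : M ≃ₗ[ℝ] M) x) = x :=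
          (g : M ≃ₗ[ℝ] M).apply_symm_apply x
        have hdecomp : ((g⁻¹ : P.weylGroup) : M ≃ₗ[ℝ] M) x - x
            = -((g : M ≃ₗ[ℝ] M) (((g⁻¹ : P.weylGroup) : M ≃ₗ[ℝ] M) x)
                - ((g⁻¹ : P.weylGroup) : M ≃ₗ[ℝ] M) x) := by rw [h1]; abel
        rw [hdecomp]
        exact neg_mem (hg _) } with hH
  have hWH : W' ≤ H := by
    rw [hW']
    rw [Subgroup.closure_le]
    rintro w ⟨i, ⟨hiΔ, hia⟩, hwrefl⟩
    intro x
    have hdiff : (w : M ≃ₗ[ℝ] M) x - x = (-(P.coroot' i x)) • P.root i := by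
      rw [hwrefl, RootPairing.reflection_apply, neg_smul]
      abel
    rw [hdiff]
    set n := f.symm ⟨i, hiΔ⟩ with hn
    have hroot : P.root i = v n := by
      rw [hv]
      simp [hn]
    have hn0 : n ≠ ⟨0, hm⟩ := by
      intro h0
      apply hia
      have h1 : f n = ⟨i, hiΔ⟩ := by rw [hn]; exact f.apply_symm_apply _
      rw [h0] at h1
      have : ((f ⟨0, hm⟩ : Δ) : ι) = i := by rw [h1]
      rw [ha0] at this
      simp [← this]
    rw [hroot]
    exact Submodule.smul_mem _ _ (Submodule.subset_span ⟨n, hn0, rfl⟩)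
  intro hmem
  have hH0 := hWH hmem (v ⟨0, hm⟩)
  have hF0 : P.root (F 0) = v ⟨0, hm⟩ := by rw [hv, hF 0 hm]
  have hsg : ((sg P F 0 : P.weylGroup) : M ≃ₗ[ℝ] M) (v ⟨0, hm⟩) = - v ⟨0, hm⟩ := by
    show P.reflection (F 0) (v ⟨0, hm⟩) = - v ⟨0, hm⟩
    rw [← hF0]
    exact P.toRootPairing.reflection_apply_self (F 0)
  rw [hsg] at hH0
  have h2 : ((-2 : ℝ)) • v ⟨0, hm⟩ ∈ V' := by
    have : (-(v ⟨0, hm⟩) - v ⟨0, hm⟩) = ((-2 : ℝ)) • v ⟨0, hm⟩ := by module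
    rwa [this] at hH0
  have hfin : v ⟨0, hm⟩ ∈ V' := by
    have := Submodule.smul_mem V' (-1/2 : ℝ) h2
    rwa [smul_smul, show (-1/2 : ℝ) * (-2) = 1 from by norm_num, one_smul] at this
  exact hnm hfin

end NotMem

end ClaimAux

open ClaimAux in
/-- **Claim before Lemma 2.** Let `Ψ` be a finite irreducible crystallographic root system with base `Δ` of
cardinality `m ≥ 1`, let `W` be its Weyl group, let `a ∈ Δ`, and let `W'` be the subgroup of `W`
generated by the reflections in the elements of `Δ \ {a}`. If there is an enumeration of `Δ`
starting at `a` whose Cartan integers are those of type `Aₘ` with `a` an end root, then the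
number of `(W', W')`-double cosets in `W` is exactly `2`. -/
theorem card_double_cosets_eq_two_of_type_A_end_root
    {ι M N : Type*} [Fintype ι] [AddCommGroup M] [Module ℝ M] [AddCommGroup N] [Module ℝ N]
    (P : RootSystem ι ℝ M N)
    (hcrys : P.IsCrystallographic)
    (hirr : RootPairingIsIrreducible P.toRootPairing)
    (Δ : Set ι) (hΔ : RootSystemIsBase P Δ)
    (m : ℕ) (hm : 1 ≤ m) (hcard : Nat.card Δ = m)
    (a : ι) (ha : a ∈ Δ)
    (W' : Subgroup P.weylGroup)
    (hW' : W' = Subgroup.closure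
      {w : P.weylGroup | ∃ i ∈ Δ \ {a}, (w : M ≃ₗ[ℝ] M) = P.reflection i})
    (hA : ∃ f : Fin m ≃ Δ, ((f ⟨0, by omega⟩ : Δ) : ι) = a ∧
      (∀ p q : Fin m, ((p : ℕ) + 1 = (q : ℕ) ∨ (q : ℕ) + 1 = (p : ℕ)) →
        P.pairing (f p) (f q) = -1) ∧
      (∀ p q : Fin m, ((p : ℕ) + 2 ≤ (q : ℕ) ∨ (q : ℕ) + 2 ≤ (p : ℕ)) →
        P.pairing (f p) (f q) = 0)) :
    Nat.card (DoubleCoset.Quotient (W' : Set P.weylGroup) (W' : Set P.weylGroup)) = 2 := by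
    classical
  obtain ⟨f, ha0, hadj, hfar⟩ := hA
  have hm0 : 0 < m := by omega
  set F : ℕ → ι := fun n => if h : n < m then ((f ⟨n, h⟩ : Δ) : ι) else ((f ⟨0, hm0⟩ : Δ) : ι)
    with hFdef
  have hF : ∀ n (h : n < m), F n = ((f ⟨n, h⟩ : Δ) : ι) := by
    intro n h; simp [hFdef, h]
  have ha0' : ((f ⟨0, hm0⟩ : Δ) : ι) = a := ha0
  have hC : IsCartanA P F m := by
    intro l i hl hi
    rw [hF l hl, hF i hi]
    unfold ClaimAux.Car
    by_cases h1 : l = i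
    · subst h1
      rw [if_pos rfl]
      exact P.toRootPairing.pairing_same _
    · rw [if_neg h1]
      by_cases h2 : l + 1 = i ∨ i + 1 = l
      · rw [if_pos h2]
        exact hadj ⟨l, hl⟩ ⟨i, hi⟩ h2
      · rw [if_neg h2]
        refine hfar ⟨l, hl⟩ ⟨i, hi⟩ ?_
        push_neg at h2
        simp only [Fin.val_mk]
        omega
  have hli2 : LinearIndependent ℝ (fun n : Fin m => P.root ((f n : Δ) : ι)) :=
    hΔ.linearIndependent.comp (fun n => f n) f.injective
  have harv : ∀ t : Fin m, ar P F (t : ℕ) = P.root ((f t : Δ) : ι) := by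
    intro t
    rw [show ar P F (t : ℕ) = P.root (F (t : ℕ)) from rfl, hF (t : ℕ) t.2]
  have hLI : ∀ c : ℕ → ℝ, (∑ n ∈ Finset.range m, c n • ar P F n) = 0 →
      ∀ n, n < m → c n = 0 := by
    intro c hcs n hn
    have hsum : ∑ t : Fin m, c (t : ℕ) • P.root ((f t : Δ) : ι) = 0 := by
      rw [← hcs, ← Fin.sum_univ_eq_sum_range (fun n => c n • ar P F n)]
      exact Finset.sum_congr rfl fun t _ => by rw [harv t]
    exact Fintype.linearIndependent_iff.mp hli2 (fun t => c (t : ℕ)) hsum ⟨n, hn⟩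
  have hPos : ∀ j : ι, (∃ c : ℕ → ℕ, P.root j = ∑ n ∈ Finset.range m, (c n : ℝ) • ar P F n) ∨
      (∃ c : ℕ → ℕ, P.root j = -∑ n ∈ Finset.range m, (c n : ℝ) • ar P F n) := by
    have hcl : ∀ x : M, x ∈ AddSubmonoid.closure (P.root '' Δ) →
        ∃ c : ℕ → ℕ, x = ∑ n ∈ Finset.range m, (c n : ℝ) • ar P F n := by
      intro x hx
      induction hx using AddSubmonoid.closure_induction with
      | mem y hy =>
        obtain ⟨i, hiΔ, rfl⟩ := hy
        refine ⟨fun n => if n = ((f.symm ⟨i, hiΔ⟩ : Fin m) : ℕ) then 1 else 0, ?_⟩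
        have hite : ∀ n ∈ Finset.range m,
            (((if n = ((f.symm ⟨i, hiΔ⟩ : Fin m) : ℕ) then (1 : ℕ) else 0) : ℕ) : ℝ) • ar P F n
            = if n = ((f.symm ⟨i, hiΔ⟩ : Fin m) : ℕ) then ar P F n else 0 := by
          intro n _; split_ifs <;> simp
        rw [Finset.sum_congr rfl hite, Finset.sum_ite_eq' (Finset.range m)]
        rw [if_pos (Finset.mem_range.mpr (f.symm ⟨i, hiΔ⟩).2)]
        rw [harv (f.symm ⟨i, hiΔ⟩)]
        simp
      | zero => exact ⟨0, by simp⟩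
      | add x y hx hy hx' hy' =>
        obtain ⟨c1, hc1⟩ := hx'
        obtain ⟨c2, hc2⟩ := hy'
        refine ⟨fun n => c1 n + c2 n, ?_⟩
        rw [hc1, hc2, ← Finset.sum_add_distrib]
        refine Finset.sum_congr rfl fun n _ => ?_
        push_cast
        rw [add_smul]
    intro j
    rcases hΔ.pos_or_neg j with h | h
    · exact Or.inl (hcl _ h)
    · right
      obtain ⟨c, hc⟩ := hcl _ h
      exact ⟨c, by rw [← hc, neg_neg]⟩
  have hgen : ∀ n, 1 ≤ n → n < m → sg P F n ∈ W' := by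
    intro n h1 hn
    rw [hW']
    apply Subgroup.subset_closure
    refine ⟨F n, ⟨?_, ?_⟩, rfl⟩
    · rw [hF n hn]; exact (f ⟨n, hn⟩).2
    · rw [hF n hn]
      simp only [Set.mem_singleton_iff]
      intro hcontra
      have hsub : (f ⟨n, hn⟩ : Δ) = f ⟨0, hm0⟩ := by
        apply Subtype.coe_injective
        show ((f ⟨n, hn⟩ : Δ) : ι) = ((f ⟨0, hm0⟩ : Δ) : ι)
        rw [hcontra, ha0']
      have := f.injective hsub
      simp only [Fin.mk.injEq] at this
      omega
  have hnotmem : sg P F 0 ∉ W' :=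
    sg_zero_not_mem P F m hm0 hF ha0' hΔ.linearIndependent hW'
  have hcover : ∀ g : P.weylGroup,
      DoubleCoset.mk W' W' g = DoubleCoset.mk W' W' 1 ∨ DoubleCoset.mk W' W' g = DoubleCoset.mk W' W' (sg P F 0) := by
    intro g
    obtain ⟨k, hk, w, hw, rfl⟩ := cover P F m hC hLI hPos hgen g
    rcases Nat.eq_zero_or_pos k with rfl | hk1
    · left
      rw [DoubleCoset.eq]
      refine ⟨w⁻¹, inv_mem hw, 1, one_mem _, ?_⟩
      rw [show cc P F 0 = (1 : P.weylGroup) from rfl]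
      group
    · right
      obtain ⟨u, hu, hcc⟩ := cc_decomp P F m hgen k hk1 hk
      rw [DoubleCoset.eq]
      refine ⟨u⁻¹, inv_mem hu, w⁻¹, inv_mem hw, ?_⟩
      rw [hcc]
      group
  have hne : DoubleCoset.mk W' W' (1 : P.weylGroup) ≠ DoubleCoset.mk W' W' (sg P F 0) := by
    intro h
    rw [DoubleCoset.eq] at h
    obtain ⟨h1, hh1, h2, hh2, heq⟩ := h
    apply hnotmem
    rw [heq, mul_one]
    exact mul_mem hh1 hh2
  rw [Nat.card_eq_two_iff]
  refine ⟨DoubleCoset.mk W' W' 1, DoubleCoset.mk W' W' (sg P F 0), hne, ?_⟩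
  apply Set.eq_univ_of_forall
  intro z
  have hz : ∃ g : P.weylGroup, DoubleCoset.mk W' W' g = z := by
    obtain ⟨g, hg⟩ := Quotient.exists_rep z
    exact ⟨g, hg⟩
  obtain ⟨g, rfl⟩ := hz
  rcases hcover g with h | h
  · rw [h]; exact Set.mem_insert _ _
  · rw [h]; exact Set.mem_insert_of_mem _ rfl
end

section
/- Let a group G act 2-transitively on a set X, let x, x' ∈ X with x ≠ x', let B be the stabilizer of x in G, and let N be the setwise stabilizer of {x, x'} in G (the subgroup of g ∈ G with g·{x,x'} = {x,x'}). Then H := B ∩ N has index exactly 2 in N, and for every n ∈ N with n ∉ B one has G = B ∪ BnB. (The construction, noted in Section 5.3, of a Tits system of rank 1 from a 2-transitive action.) -/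
open Pointwise

/-- Let a group `G` act 2-transitively on a set `X`, let `x ≠ x'` in `X`, let `B` be the
stabilizer of `x` and `N` the setwise stabilizer of `{x, x'}`. Then `H = B ∩ N` has index
exactly `2` in `N`, and for every `n ∈ N` with `n ∉ B` one has `G = B ∪ BnB`. -/
theorem rank_one_tits_system_of_two_transitive
    {G X : Type*} [Group G] [MulAction G X]
    (h2 : IsTwoTransitive G X) (x x' : X) (hxx' : x ≠ x')
    (B N : Subgroup G)
    (hB : B = MulAction.stabilizer G x)
    (hN : N = MulAction.stabilizer G ({x, x'} : Set X)) :
    B.relIndex N = 2 ∧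
      ∀ n ∈ N, n ∉ B → ∀ g : G, g ∈ B ∨ ∃ b ∈ B, ∃ b' ∈ B, g = b * n * b' := by

  subst hB hN
  -- elements of N map x into {x, x'}
  have key : ∀ m ∈ MulAction.stabilizer G ({x, x'} : Set X), ∀ y ∈ ({x, x'} : Set X),
      m • y ∈ ({x, x'} : Set X) := by
    intro m hm y hy
    have hm' : m • ({x, x'} : Set X) = {x, x'} := hm
    rw [← hm']
    exact Set.smul_mem_smul_set hy
  -- a swapping element
  obtain ⟨n0, hn01, hn02⟩ := h2 x x' x' x hxx' hxx'.symm
  have hn0N : n0 ∈ MulAction.stabilizer G ({x, x'} : Set X) := by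
    show n0 • ({x, x'} : Set X) = {x, x'}
    rw [Set.smul_set_insert, Set.smul_set_singleton, hn01, hn02, Set.pair_comm]
  constructor
  · rw [Subgroup.relIndex, Subgroup.index_eq_two_iff]
    refine ⟨⟨n0, hn0N⟩, fun b => ?_⟩
    have hbx : (b : G) • x ∈ ({x, x'} : Set X) := key b b.2 x (Set.mem_insert x _)
    have h1 : b * ⟨n0, hn0N⟩ ∈ (MulAction.stabilizer G x).subgroupOf
        (MulAction.stabilizer G ({x, x'} : Set X)) ↔ (b : G) • x' = x := by
      rw [Subgroup.mem_subgroupOf, MulAction.mem_stabilizer_iff]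
      simp [mul_smul, hn01]
    have h2' : b ∈ (MulAction.stabilizer G x).subgroupOf
        (MulAction.stabilizer G ({x, x'} : Set X)) ↔ (b : G) • x = x := by
      rw [Subgroup.mem_subgroupOf, MulAction.mem_stabilizer_iff]
    rw [h1, h2']
    rcases hbx with hbx | hbx
    · refine Or.inr ⟨hbx, fun h => hxx' ?_⟩
      exact smul_left_cancel (b : G) (by rw [hbx, h])
    · refine Or.inl ⟨?_, fun h => hxx' (by rw [← h, hbx])⟩
      have hbx' : (b : G) • x' ∈ ({x, x'} : Set X) :=
        key b b.2 x' (Set.mem_insert_of_mem _ rfl)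
      rcases hbx' with h' | h'
      · exact h'
      · exact absurd (smul_left_cancel (b : G) (by rw [hbx, h'])) hxx'
  · intro n hnN hnB g
    have hnx : n • x = x' := by
      rcases key n hnN x (Set.mem_insert x _) with h | h
      · exact absurd h hnB
      · exact h
    by_cases hg : g • x = x
    · exact Or.inl hg
    · obtain ⟨b, hb1, hb2⟩ := h2 x (g • x) x x' (fun h => hg h.symm) hxx'
      refine Or.inr ⟨b⁻¹, ?_, n⁻¹ * b * g, ?_, by group⟩
      · show b⁻¹ • x = x
        rw [inv_smul_eq_iff, hb1]
      · show (n⁻¹ * b * g) • x = x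
        rw [mul_smul, mul_smul, hb2, ← hnx, inv_smul_smul]
end

section
/- Let G be a group, B a subgroup of G, U a subgroup of B, and T a finite subset of G such that G = ⋃_{t ∈ T} U t B (every element of G can be written as u t b with u ∈ U, t ∈ T, b ∈ B). If U contains a subgroup U₀ of finite index in U with U₀ contained in the center of G, then B has finite index in G. (The argument, used in the proofs of Propositions 2 and 4, that a weakly-split Bruhat decomposition with virtually central U forces B to have finite index.) -/
/-- Let `G` be a group, `B` a subgroup, `U` a subgroup of `B`, and `T` a finite subset of `G`
such that `G = ⋃_{t ∈ T} U t B`. If `U` contains a subgroup `U₀` of finite index in `U` with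
`U₀` contained in the center of `G`, then `B` has finite index in `G`. -/
theorem finite_index_of_cover_by_double_cosets_of_virtually_central
    {G : Type*} [Group G] (B U U₀ : Subgroup G)
    (hUB : U ≤ B) (hU₀U : U₀ ≤ U)
    (hU₀central : U₀ ≤ Subgroup.center G)
    (hU₀fin : (U₀.subgroupOf U).FiniteIndex)
    (T : Finset G)
    (hcover : ∀ g : G, ∃ u ∈ U, ∃ t ∈ T, ∃ b ∈ B, g = u * t * b) :
    B.FiniteIndex := by
  haveI : Finite (U ⧸ U₀.subgroupOf U) := Subgroup.finite_quotient_of_finiteIndex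
  have hsurj : Function.Surjective
      (fun p : (U ⧸ U₀.subgroupOf U) × T =>
        (QuotientGroup.mk (((Quotient.out p.1 : U) : G) * p.2.1) : G ⧸ B)) := by
    intro q
    obtain ⟨g, rfl⟩ := QuotientGroup.mk_surjective q
    obtain ⟨u, hu, t, ht, b, hb, rfl⟩ := hcover g
    refine ⟨⟨QuotientGroup.mk (⟨u, hu⟩ : U), ⟨t, ht⟩⟩, ?_⟩
    set r : U := Quotient.out (QuotientGroup.mk (⟨u, hu⟩ : U) : U ⧸ U₀.subgroupOf U) with hrdef
    have hr : r⁻¹ * ⟨u, hu⟩ ∈ U₀.subgroupOf U := by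
      rw [← QuotientGroup.eq]
      exact QuotientGroup.out_eq' _
    have hw : (r : G)⁻¹ * u ∈ U₀ := hr
    have hcomm : ((r : G)⁻¹ * u) * t = t * ((r : G)⁻¹ * u) :=
      Subgroup.mem_center_iff.mp (hU₀central hw) t |>.symm
    simp only
    rw [QuotientGroup.eq]
    have key : ((r : G) * t)⁻¹ * (u * t * b) = ((r : G)⁻¹ * u) * b := by
      rw [show u * t = (r : G) * (t * ((r : G)⁻¹ * u)) by rw [← hcomm]; group]
      group
    rw [key]
    exact B.mul_mem (hUB (hU₀U hw)) hb
  haveI : Finite (G ⧸ B) := Finite.of_surjective _ hsurj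
  exact B.finiteIndex_of_finite_quotient
end

section
/- Let G be a group, let B and N be subgroups of G that together generate G (G is the subgroup closure of B ∪ N), let H be a subgroup of B normalized by N (nHn⁻¹ = H for all n ∈ N), and let U be a subgroup of B contained in the center of G such that every element of B is a product hu with h ∈ H and u ∈ U. If B is self-normalizing in G (the normalizer of B in G equals B), then B = G. (The concluding step in the proof of Theorem A.) -/
/-- Let `G` be a group, let `B` and `N` be subgroups generating `G`, let `H ≤ B` be normalized
by `N`, and let `U ≤ B` be contained in the center of `G` with `B = HU`. If `B` is
self-normalizing in `G`, then `B = G`. -/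
theorem eq_top_of_weakly_split_with_central_U
    {G : Type*} [Group G] (B N H U : Subgroup G)
    (hgen : Subgroup.closure ((B : Set G) ∪ (N : Set G)) = ⊤)
    (hHB : H ≤ B)
    (hHN : ∀ n ∈ N, Subgroup.map (MulAut.conj n).toMonoidHom H = H)
    (hUB : U ≤ B)
    (hUcentral : U ≤ Subgroup.center G)
    (hB : ∀ b ∈ B, ∃ h ∈ H, ∃ u ∈ U, b = h * u)
    (hself : Subgroup.normalizer (B : Set G) = B) :
    B = ⊤ := by
  have hNB : N ≤ B := by
    intro n hn
    rw [← hself]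
    rw [Subgroup.mem_normalizer_iff]
    intro g
    constructor
    · intro hg
      obtain ⟨h, hh, u, hu, rfl⟩ := hB g hg
      have h1 : n * h * n⁻¹ ∈ H := by
        rw [← hHN n hn]
        exact ⟨h, hh, rfl⟩
      have hc := Subgroup.mem_center_iff.mp (hUcentral hu)
      have : n * (h * u) * n⁻¹ = (n * h * n⁻¹) * u :=
        calc n * (h * u) * n⁻¹ = n * h * (u * n⁻¹) := by group
        _ = n * h * (n⁻¹ * u) := by rw [hc n⁻¹]
        _ = (n * h * n⁻¹) * u := by group
      rw [this]
      exact B.mul_mem (hHB h1) (hUB hu)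
    · intro hg
      obtain ⟨h, hh, u, hu, heq⟩ := hB _ hg
      have h1 : n⁻¹ * h * n ∈ H := by
        have : h ∈ Subgroup.map (MulAut.conj n).toMonoidHom H := by rw [hHN n hn]; exact hh
        obtain ⟨h', hh', hconj⟩ := this
        have : n⁻¹ * h * n = h' := by
          simp [MulAut.conj] at hconj
          rw [← hconj]; group
        rw [this]; exact hh'
      have hc := Subgroup.mem_center_iff.mp (hUcentral hu)
      have hgeq : g = (n⁻¹ * h * n) * u := by
        have hg' : g = n⁻¹ * (h * u) * n := by rw [← heq]; group
        rw [hg']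
        calc n⁻¹ * (h * u) * n = n⁻¹ * h * (u * n) := by group
        _ = n⁻¹ * h * (n * u) := by rw [← hc n]
        _ = (n⁻¹ * h * n) * u := by group
      rw [hgeq]
      exact B.mul_mem (hHB h1) (hUB hu)
  have : Subgroup.closure ((B : Set G) ∪ (N : Set G)) ≤ B := by
    rw [Subgroup.closure_le]
    exact Set.union_subset (le_refl _) hNB
  exact top_le_iff.mp (hgen ▸ this)
end
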